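/- For the single-qubit transpose channel Γ_θ(ρ) = θρ + (1−θ)ρ^T with θ ∈ (0,1), the maximum over single-qubit density matrices ρ of the SLD Fisher information of the output family θ ↦ Γ_θ(ρ) equals 1/(θ(1−θ)), attained by the eigenstates of σ_y. -/

import Mathlib

open Matrix
open scoped ComplexOrder
noncomputable section

def σy : Matrix (Fin 2) (Fin 2) ℂ := !![0, -Complex.I; Complex.I, 0]

/-- The single-qubit transpose channel `Γ_t(ρ) = tρ + (1-t)ρᵀ`. -/
def transpCh (t : ℝ) (ρ : Matrix (Fin 2) (Fin 2) ℂ) : Matrix (Fin 2) (Fin 2) ℂ :=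
  (t : ℂ) • ρ + ((1 - t : ℝ) : ℂ) • ρᵀ

lemma keyIneq (θ p Rb β x y Rz Iz : ℝ) (hθ0 : 0 < θ) (hθ1 : θ < 1)
    (hC : Rb^2 + β^2 ≤ p*(1-p)) (hp1 : p*(1-p) ≤ 1/4)
    (E1 : p*x + (Rb*Rz + (2*θ-1)*β*Iz) = 0)
    (E2 : (1-p)*y + (Rb*Rz + (2*θ-1)*β*Iz) = 0)
    (E3a : Rz + Rb*(x+y) = 0)
    (E3b : Iz + (2*θ-1)*β*(x+y) = 4*β) :
    4*β*Iz ≤ 1/(θ*(1-θ)) := by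
  have hk : 0 < θ*(1-θ) := by nlinarith
  have hkinv : 0 ≤ 1/(θ*(1-θ)) := by positivity
  rcases eq_or_ne β 0 with hb | hb
  · subst hb
    have h0 : 4*(0:ℝ)*Iz = 0 := by ring
    rw [h0]; exact hkinv
  · set u := x + y with hu
    set D := p*(1-p) - Rb^2 - (2*θ-1)^2*β^2 with hD
    have hcomb : p*(1-p)*u + (Rb*Rz + (2*θ-1)*β*Iz) = 0 := by
      linear_combination (1-p)*E1 + p*E2
    have hUD : u * D = -4*(2*θ-1)*β^2 := by
      linear_combination hcomb - Rb*E3a - (2*θ-1)*β*E3b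
    have hβpos : 0 < β^2 := by positivity
    have hD2 : 4*(θ*(1-θ))*β^2 ≤ D := by nlinarith [hC]
    have hDpos : 0 < D := by nlinarith
    have hβ14 : β^2 ≤ 1/4 := by nlinarith [sq_nonneg Rb]
    have hF : 4*β*Iz = 16*β^2 - 4*(2*θ-1)*β^2*u := by linear_combination 4*β*E3b
    rw [hF, le_div_iff₀ hk]
    have h1 : 0 ≤ D*(1-4*β^2) := by nlinarith
    have h2 : 0 ≤ 4*(2*θ-1)^2*β^2*(D - 4*(θ*(1-θ))*β^2) := by
      have h3 : 0 ≤ 4*(2*θ-1)^2*β^2 := by positivity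
      nlinarith
    have hiden : 1*D - (16*β^2 - 4*(2*θ-1)*β^2*u)*(θ*(1-θ))*D
        = D*(1-4*β^2) + 4*(2*θ-1)^2*β^2*(D - 4*(θ*(1-θ))*β^2) := by
      linear_combination (4*(2*θ-1)*(θ*(1-θ))*β^2) * hUD
    have key2 : (16*β^2 - 4*(2*θ-1)*β^2*u) * (θ*(1-θ)) * D ≤ 1 * D := by
      linarith [hiden, h1, h2]
    exact le_of_mul_le_mul_right key2 hDpos

lemma keyEq (θ a x y Rz Iz : ℝ) (hθ0 : 0 < θ) (hθ1 : θ < 1) (ha : a^2 = 1)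
    (E1 : (1/2)*x + (0*Rz + (2*θ-1)*(-a/2)*Iz) = 0)
    (E2 : (1-1/2)*y + (0*Rz + (2*θ-1)*(-a/2)*Iz) = 0)
    (E3b : Iz + (2*θ-1)*(-a/2)*(x+y) = 4*(-a/2)) :
    4*(-a/2)*Iz = 1/(θ*(1-θ)) := by
  have hk : 0 < θ*(1-θ) := by nlinarith
  have hx : x = (2*θ-1)*a*Iz := by linarith
  have hy : y = (2*θ-1)*a*Iz := by linarith
  have hIz : Iz * (4*(θ*(1-θ))) = -2*a := by
    have h := E3b
    rw [hx, hy] at h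
    linear_combination h + Iz*(2*θ-1)^2*ha
  rw [eq_div_iff (ne_of_gt hk)]
  linear_combination (-a/2)*hIz + ha

lemma deriv_entry (θ : ℝ) (ρ ρ' : Matrix (Fin 2) (Fin 2) ℂ)
    (hd : ∀ i j, HasDerivAt (fun t => transpCh t ρ i j) (ρ' i j) θ) (i j : Fin 2) :
    ρ' i j = ρ i j - ρ j i := by
  have h0 : HasDerivAt (fun t : ℝ => (t:ℂ)) 1 θ := by
    simpa using (hasDerivAt_id θ).ofReal_comp
  have h2 : HasDerivAt (fun t : ℝ => ρ j i + (ρ i j - ρ j i) * (t:ℂ))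
      (ρ i j - ρ j i) θ := by
    simpa using (h0.const_mul (ρ i j - ρ j i)).const_add (ρ j i)
  have h3 : HasDerivAt (fun t => transpCh t ρ i j) (ρ i j - ρ j i) θ := by
    convert h2 using 1
    funext t
    simp [transpCh, Matrix.add_apply, Matrix.smul_apply, Matrix.transpose_apply,
      smul_eq_mul]
    ring
  exact (hd i j).unique h3

lemma entryFacts (θ : ℝ) (ρ ρ' L : Matrix (Fin 2) (Fin 2) ℂ)
    (hherm : ρ 1 0 = starRingEnd ℂ (ρ 0 1))
    (h00im : (ρ 0 0).im = 0)
    (htr : ρ 0 0 + ρ 1 1 = 1)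
    (hdρ' : ∀ i j, ρ' i j = ρ i j - ρ j i)
    (hL : L.IsHermitian)
    (hsld : ρ' = (1/2 : ℂ) • (transpCh θ ρ * L + L * transpCh θ ρ)) :
    ((L*ρ').trace).re = 4*(ρ 0 1).im*(L 0 1).im ∧
    (ρ 0 0).re*(L 0 0).re + ((ρ 0 1).re*(L 0 1).re + (2*θ-1)*(ρ 0 1).im*(L 0 1).im) = 0 ∧
    (1-(ρ 0 0).re)*(L 1 1).re + ((ρ 0 1).re*(L 0 1).re + (2*θ-1)*(ρ 0 1).im*(L 0 1).im) = 0 ∧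
    (L 0 1).re + (ρ 0 1).re*((L 0 0).re+(L 1 1).re) = 0 ∧
    (L 0 1).im + (2*θ-1)*(ρ 0 1).im*((L 0 0).re+(L 1 1).re) = 4*(ρ 0 1).im := by
  set p := (ρ 0 0).re
  set Rb := (ρ 0 1).re
  set β := (ρ 0 1).im
  set x := (L 0 0).re
  set y := (L 1 1).re
  set Rz := (L 0 1).re
  set Iz := (L 0 1).im
  have hρ00 : ρ 0 0 = (p:ℂ) := by
    apply Complex.ext <;> simp [h00im] <;> rfl
  have hρ11 : ρ 1 1 = ((1:ℂ) - (p:ℂ)) := by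
    rw [← hρ00]; linear_combination htr
  have hρ01 : ρ 0 1 = (Rb:ℂ) + (β:ℂ)*Complex.I := (Complex.re_add_im _).symm
  have hρ10 : ρ 1 0 = (Rb:ℂ) - (β:ℂ)*Complex.I := by
    rw [hherm, hρ01]
    simp [Complex.ext_iff]
  have hL00im : (L 0 0).im = 0 := by
    have h := congrArg Complex.im (hL.apply 0 0)
    simp at h
    linarith
  have hL11im : (L 1 1).im = 0 := by
    have h := congrArg Complex.im (hL.apply 1 1)
    simp at h
    linarith
  have hL00 : L 0 0 = (x:ℂ) := by apply Complex.ext <;> simp [hL00im] <;> rfl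
  have hL11 : L 1 1 = (y:ℂ) := by apply Complex.ext <;> simp [hL11im] <;> rfl
  have hL01 : L 0 1 = (Rz:ℂ) + (Iz:ℂ)*Complex.I := (Complex.re_add_im _).symm
  have hL10 : L 1 0 = (Rz:ℂ) - (Iz:ℂ)*Complex.I := by
    have h := congrArg star (hL.apply 0 1)
    simp only [star_star] at h
    rw [h, hL01]
    simp [Complex.ext_iff]
  have hΓ : ∀ i j, transpCh θ ρ i j = (θ:ℂ)*ρ i j + ((1-θ:ℝ):ℂ)*ρ j i := by
    intro i j
    simp [transpCh, Matrix.add_apply, Matrix.smul_apply, Matrix.transpose_apply, smul_eq_mul]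
  have hE2 : ∀ i j : Fin 2, 2*(ρ i j - ρ j i)
      = ((transpCh θ ρ * L) i j + (L * transpCh θ ρ) i j) := by
    intro i j
    have h := congrFun (congrFun hsld i) j
    rw [hdρ'] at h
    simp only [Matrix.smul_apply, smul_eq_mul, Matrix.add_apply] at h
    linear_combination 2*h
  have h00 := hE2 0 0
  have h01 := hE2 0 1
  have h11 := hE2 1 1
  simp only [Matrix.mul_apply, Fin.sum_univ_two, hΓ, hρ00, hρ01, hρ10, hρ11,
    hL00, hL01, hL10, hL11] at h00 h01 h11
  have h00re := congrArg Complex.re h00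
  have h01re := congrArg Complex.re h01
  have h01im := congrArg Complex.im h01
  have h11re := congrArg Complex.re h11
  simp only [Complex.add_re, Complex.sub_re, Complex.mul_re, Complex.mul_im,
    Complex.add_im, Complex.sub_im, Complex.I_re, Complex.I_im, Complex.ofReal_re,
    Complex.ofReal_im, Complex.one_re, Complex.one_im, Complex.re_ofNat, Complex.im_ofNat]
    at h00re h01re h01im h11re
  refine ⟨?_, ?_, ?_, ?_, ?_⟩
  · have htrc : (L*ρ').trace
        = L 0 0 * ρ' 0 0 + L 0 1 * ρ' 1 0 + L 1 0 * ρ' 0 1 + L 1 1 * ρ' 1 1 := by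
      simp [Matrix.trace, Matrix.mul_apply, Fin.sum_univ_two, Matrix.diag]
      ring
    rw [htrc, hdρ' 0 0, hdρ' 1 0, hdρ' 0 1, hdρ' 1 1, hρ01, hρ10, hL01, hL10, hL00, hL11]
    simp [Complex.ext_iff]
    ring
  · linear_combination (-1/2) * h00re
  · linear_combination (-1/2) * h11re
  · linear_combination -h01re
  · linear_combination -h01im

theorem transpose_channel_fisher_optimal (θ : ℝ) (hθ : θ ∈ Set.Ioo (0 : ℝ) 1) :
    (∀ ρ : Matrix (Fin 2) (Fin 2) ℂ, ρ.PosSemidef → ρ.trace = 1 →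
      ∀ ρ' : Matrix (Fin 2) (Fin 2) ℂ,
        (∀ i j, HasDerivAt (fun t => transpCh t ρ i j) (ρ' i j) θ) →
        ∀ L : Matrix (Fin 2) (Fin 2) ℂ, L.IsHermitian →
          ρ' = (1 / 2 : ℂ) • (transpCh θ ρ * L + L * transpCh θ ρ) →
          ((L * ρ').trace).re ≤ 1 / (θ * (1 - θ))) ∧
    (∀ (v : Fin 2 → ℂ) (a : ℝ), (∑ i, ‖v i‖ ^ 2 = 1) →
      σy *ᵥ v = (a : ℂ) • v →
      ∀ ρ' : Matrix (Fin 2) (Fin 2) ℂ,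
        (∀ i j, HasDerivAt (fun t => transpCh t (vecMulVec v (star v)) i j) (ρ' i j) θ) →
        ∀ L : Matrix (Fin 2) (Fin 2) ℂ, L.IsHermitian →
          ρ' = (1 / 2 : ℂ) • (transpCh θ (vecMulVec v (star v)) * L +
            L * transpCh θ (vecMulVec v (star v))) →
          ((L * ρ').trace).re = 1 / (θ * (1 - θ))) := by
  obtain ⟨hθ0, hθ1⟩ := hθ
  constructor
  · intro ρ hρ htrace ρ' hd L hL hsld
    have hdρ' := deriv_entry θ ρ ρ' hd
    have hherm : ρ 1 0 = starRingEnd ℂ (ρ 0 1) := (hρ.1.apply 1 0).symm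
    have h00im : (ρ 0 0).im = 0 := by
      have h := congrArg Complex.im (hρ.1.apply 0 0)
      simp at h
      linarith
    have htr : ρ 0 0 + ρ 1 1 = 1 := by
      have := htrace
      rw [Matrix.trace_fin_two] at this
      exact this
    set p := (ρ 0 0).re with hpdef
    set Rb := (ρ 0 1).re
    set β := (ρ 0 1).im
    have hρ00 : ρ 0 0 = (p:ℂ) := by apply Complex.ext <;> simp [h00im] <;> rfl
    have hρ11 : ρ 1 1 = ((1:ℂ) - (p:ℂ)) := by rw [← hρ00]; linear_combination htr
    have hρ01 : ρ 0 1 = (Rb:ℂ) + (β:ℂ)*Complex.I := (Complex.re_add_im _).symm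
    have hρ10 : ρ 1 0 = (Rb:ℂ) - (β:ℂ)*Complex.I := by
      rw [hherm, hρ01]; simp [Complex.ext_iff]
    have q1 := hρ.dotProduct_mulVec_nonneg ![-(ρ 0 1), ρ 0 0]
    have q2 := hρ.dotProduct_mulVec_nonneg ![ρ 1 1, -(star (ρ 0 1))]
    have q3 := hρ.dotProduct_mulVec_nonneg ![1, 0]
    have q4 := hρ.dotProduct_mulVec_nonneg ![0, 1]
    simp only [dotProduct, Matrix.mulVec, Fin.sum_univ_two, Matrix.cons_val_zero,
      Matrix.cons_val_one, Matrix.head_cons, Pi.star_apply, star_neg, star_one, star_zero,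
      Complex.star_def, hρ00, hρ01, hρ10, hρ11, _root_.map_add, _root_.map_sub,
      _root_.map_mul, map_neg, Complex.conj_I, Complex.conj_ofReal, Complex.conj_conj,
      _root_.map_one, _root_.map_zero] at q1 q2 q3 q4
    rw [Complex.le_def] at q1 q2 q3 q4
    have r1 := q1.1
    have r2 := q2.1
    have r3 := q3.1
    have r4 := q4.1
    simp only [Complex.add_re, Complex.sub_re, Complex.mul_re, Complex.mul_im,
      Complex.add_im, Complex.sub_im, Complex.I_re, Complex.I_im, Complex.ofReal_re,
      Complex.ofReal_im, Complex.one_re, Complex.one_im, Complex.zero_re, Complex.zero_im,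
      Complex.neg_re, Complex.neg_im, mul_zero, zero_mul, mul_one, one_mul, sub_zero,
      zero_sub, add_zero, zero_add, neg_zero, neg_neg] at r1 r2 r3 r4
    ring_nf at r1 r2 r3 r4
    have hC : Rb^2 + β^2 ≤ p*(1-p) := by nlinarith [r1, r2]
    have hp0 : 0 ≤ p := by nlinarith [r3]
    have hple : p ≤ 1 := by nlinarith [r4]
    have hp1 : p*(1-p) ≤ 1/4 := by nlinarith [sq_nonneg (2*p-1)]
    obtain ⟨hT, E1, E2, E3a, E3b⟩ := entryFacts θ ρ ρ' L hherm h00im htr hdρ' hL hsld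
    rw [hT]
    exact keyIneq θ p Rb β _ _ _ _ hθ0 hθ1 hC hp1 E1 E2 E3a E3b
  · intro v a hnorm heig ρ' hd L hL hsld
    set ρ := vecMulVec v (star v) with hρdef
    have happ : ∀ i j, ρ i j = v i * starRingEnd ℂ (v j) := by
      intro i j
      simp [hρdef, Matrix.vecMulVec_apply, Pi.star_apply, Complex.star_def]
    have hnorm' : Complex.normSq (v 0) + Complex.normSq (v 1) = 1 := by
      have h := hnorm
      rw [Fin.sum_univ_two] at h
      rw [← Complex.sq_norm, ← Complex.sq_norm]
      exact h
    have h1 : -Complex.I * v 1 = (a:ℂ) * v 0 := by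
      have h := congrFun heig 0
      simp [σy, Matrix.mulVec, dotProduct, Fin.sum_univ_two] at h
      linear_combination h
    have h2 : Complex.I * v 0 = (a:ℂ) * v 1 := by
      have h := congrFun heig 1
      simp [σy, Matrix.mulVec, dotProduct, Fin.sum_univ_two] at h
      linear_combination h
    have hvne : ¬(v 0 = 0 ∧ v 1 = 0) := by
      rintro ⟨e0, e1⟩
      rw [e0, e1] at hnorm'
      simp at hnorm'
    have hI : Complex.I^2 = -1 := Complex.I_sq
    have ha2 : (a:ℂ)^2 = 1 := by
      have k0 : ((a:ℂ)^2 - 1) * v 0 = 0 := by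
        linear_combination -(a:ℂ)*h1 + Complex.I*h2 - v 0 * hI
      have k1 : ((a:ℂ)^2 - 1) * v 1 = 0 := by
        linear_combination -(a:ℂ)*h2 - Complex.I*h1 - v 1 * hI
      rcases mul_eq_zero.mp k0 with hz | hz0
      · linear_combination hz
      · rcases mul_eq_zero.mp k1 with hz | hz1
        · linear_combination hz
        · exact absurd ⟨hz0, hz1⟩ hvne
    have haR : a^2 = 1 := by
      have h : ((a^2 : ℝ) : ℂ) = ((1:ℝ):ℂ) := by push_cast; exact ha2
      exact_mod_cast h
    have hv1 : v 1 = (a:ℂ) * Complex.I * v 0 := by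
      linear_combination -(a:ℂ)*h2 - v 1 * ha2
    have hnsq : Complex.normSq (v 0) = 1/2 := by
      have h := congrArg Complex.normSq hv1
      simp only [Complex.normSq_mul, Complex.normSq_I, Complex.normSq_ofReal] at h
      nlinarith [hnorm', h, haR]
    have hmc : v 0 * starRingEnd ℂ (v 0) = ((1/2 : ℝ):ℂ) := by
      rw [Complex.mul_conj, hnsq]
    have hp : ρ 0 0 = ((1/2 : ℝ):ℂ) := by rw [happ]; exact hmc
    have hb : ρ 0 1 = ((0:ℝ):ℂ) + ((-a/2 : ℝ):ℂ) * Complex.I := by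
      have hstep : ρ 0 1 = -(a:ℂ)*Complex.I*(v 0 * starRingEnd ℂ (v 0)) := by
        rw [happ, hv1]
        simp only [_root_.map_mul, Complex.conj_I, Complex.conj_ofReal]
        ring
      rw [hstep, hmc]
      push_cast
      ring
    have hherm : ρ 1 0 = starRingEnd ℂ (ρ 0 1) := by
      rw [happ, happ, _root_.map_mul]
      simp only [Complex.conj_conj]
      ring
    have h00im : (ρ 0 0).im = 0 := by rw [hp]; simp
    have htr : ρ 0 0 + ρ 1 1 = 1 := by
      rw [happ, happ, Complex.mul_conj, Complex.mul_conj, hnsq]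
      have h : Complex.normSq (v 1) = 1/2 := by linarith [hnorm']
      rw [h]
      norm_num
    have hdρ' := deriv_entry θ ρ ρ' hd
    obtain ⟨hT, E1, E2, E3a, E3b⟩ := entryFacts θ ρ ρ' L hherm h00im htr hdρ' hL hsld
    have hpre : (ρ 0 0).re = 1/2 := by rw [hp]; simp
    have hbre : (ρ 0 1).re = 0 := by rw [hb]; simp
    have hbim : (ρ 0 1).im = -a/2 := by rw [hb]; simp
    rw [hbim] at hT E3b
    rw [hpre, hbre, hbim] at E1 E2
    rw [hT]
    exact keyEq θ a _ _ _ _ hθ0 hθ1 haR E1 E2 E3b
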